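/- Let H = (H¹, H²) : Ω → ℝ² be a C¹ vector field on an open set Ω ⊂ ℝ². For (a₁,a₂) ∈ {(1,0),(0,1),(1,1),(1,-1)} define H̃(a₁,a₂) = a₁H¹ + a₂H². Then pointwise on Ω, |∇H|²|H|² ≤ |∇|H̃(1,0)|²|² + |∇|H̃(0,1)|²|² + |∇|H̃(1,1)|²|² + |∇|H̃(1,-1)|²|², and consequently ‖|∇H||H|‖_{L²(Ω)}² ≤ ‖∇|H̃(1,0)|²‖_{L²}² + ‖∇|H̃(0,1)|²‖_{L²}² + ‖∇|H̃(1,1)|²‖_{L²}² + ‖∇|H̃(1,-1)|²‖_{L²}². -/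

import Mathlib

open MeasureTheory Real

/-- Frobenius square of the gradient of a vector field on `ℝ²` -/
noncomputable def gradsq (H : EuclideanSpace ℝ (Fin 2) → EuclideanSpace ℝ (Fin 2))
    (x : EuclideanSpace ℝ (Fin 2)) : ℝ :=
  ∑ i : Fin 2, ∑ j : Fin 2,
    (fderiv ℝ (fun y => H y j) x (EuclideanSpace.single i (1 : ℝ))) ^ 2

lemma opnorm_sq (L : EuclideanSpace ℝ (Fin 2) →L[ℝ] ℝ) :
    ‖L‖^2 = ∑ i : Fin 2, (L (EuclideanSpace.single i 1))^2 := by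
  set v := (InnerProductSpace.toDual ℝ (EuclideanSpace ℝ (Fin 2))).symm L with hv
  have hL : ∀ w, L w = inner ℝ v w := by
    intro w
    simp [hv, InnerProductSpace.toDual_symm_apply]
  have hnorm : ‖L‖ = ‖v‖ :=
    ((InnerProductSpace.toDual ℝ (EuclideanSpace ℝ (Fin 2))).symm.norm_map L).symm
  rw [hnorm]
  have h2 : ∀ i, L (EuclideanSpace.single i 1) = v i := by
    intro i; rw [hL]
    rw [real_inner_comm]
    simp [EuclideanSpace.inner_single_left]
  simp only [h2]
  rw [EuclideanSpace.norm_eq, Real.sq_sqrt (by positivity)]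
  simp [sq_abs]

lemma poly1 (a b ai bi : ℝ) :
    (ai^2+bi^2)*(a^2+b^2) ≤ 4*a^2*ai^2 + 4*b^2*bi^2 + 4*(a+b)^2*(ai+bi)^2 + 4*(a-b)^2*(ai-bi)^2 := by
  nlinarith [sq_nonneg (a*ai+b*bi), sq_nonneg (a*bi+b*ai), sq_nonneg (a*bi-b*ai), sq_nonneg (a*ai-b*bi)]

lemma sq_fderiv {g : EuclideanSpace ℝ (Fin 2) → ℝ} {Lg : EuclideanSpace ℝ (Fin 2) →L[ℝ] ℝ}
    {x : EuclideanSpace ℝ (Fin 2)} (hg : HasFDerivAt g Lg x) :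
    fderiv ℝ (fun y => g y ^ 2) x = (2 * g x) • Lg := by
  have h2 : (2 * g x) • Lg = g x • Lg + g x • Lg := by rw [mul_smul, two_smul]
  have hm := hg.mul hg
  rw [← h2] at hm
  have : HasFDerivAt (fun y => g y ^ 2) ((2 * g x) • Lg) x := by
    have hf : (fun y => g y ^ 2) = g * g := by funext y; simp [pow_two]
    rw [hf]; exact hm
  exact this.fderiv

/-- polarization inequality
`|∇H|²|H|² ≤ Σ |∇|H̃(a₁,a₂)|²|²` over `(a₁,a₂) ∈ {(1,0),(0,1),(1,1),(1,-1)}`,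
pointwise and in `L²`. -/
theorem stmt6 (Ω : Set (EuclideanSpace ℝ (Fin 2))) (hΩ : IsOpen Ω)
    (H : EuclideanSpace ℝ (Fin 2) → EuclideanSpace ℝ (Fin 2))
    (hH : ContDiffOn ℝ 1 H Ω) :
    (∀ x ∈ Ω,
      gradsq H x * ‖H x‖ ^ 2
        ≤ ‖fderiv ℝ (fun y => (H y 0) ^ 2) x‖ ^ 2
          + ‖fderiv ℝ (fun y => (H y 1) ^ 2) x‖ ^ 2
          + ‖fderiv ℝ (fun y => (H y 0 + H y 1) ^ 2) x‖ ^ 2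
          + ‖fderiv ℝ (fun y => (H y 0 - H y 1) ^ 2) x‖ ^ 2)
    ∧ (∫⁻ x in Ω, ENNReal.ofReal (gradsq H x * ‖H x‖ ^ 2))
        ≤ (∫⁻ x in Ω, ENNReal.ofReal (‖fderiv ℝ (fun y => (H y 0) ^ 2) x‖ ^ 2))
          + (∫⁻ x in Ω, ENNReal.ofReal (‖fderiv ℝ (fun y => (H y 1) ^ 2) x‖ ^ 2))
          + (∫⁻ x in Ω, ENNReal.ofReal (‖fderiv ℝ (fun y => (H y 0 + H y 1) ^ 2) x‖ ^ 2))
          + (∫⁻ x in Ω, ENNReal.ofReal (‖fderiv ℝ (fun y => (H y 0 - H y 1) ^ 2) x‖ ^ 2)) := by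
  have hpt : ∀ x ∈ Ω,
      gradsq H x * ‖H x‖ ^ 2
        ≤ ‖fderiv ℝ (fun y => (H y 0) ^ 2) x‖ ^ 2
          + ‖fderiv ℝ (fun y => (H y 1) ^ 2) x‖ ^ 2
          + ‖fderiv ℝ (fun y => (H y 0 + H y 1) ^ 2) x‖ ^ 2
          + ‖fderiv ℝ (fun y => (H y 0 - H y 1) ^ 2) x‖ ^ 2 := by
    intro x hx
    have hdiff : DifferentiableAt ℝ H x :=
      (hH.differentiableOn one_ne_zero).differentiableAt (hΩ.mem_nhds hx)
    set d := fderiv ℝ H x with hd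
    have hj : ∀ j : Fin 2, HasFDerivAt (fun y => H y j)
        ((EuclideanSpace.proj j : EuclideanSpace ℝ (Fin 2) →L[ℝ] ℝ).comp d) x := by
      intro j
      exact (EuclideanSpace.proj j :
        EuclideanSpace ℝ (Fin 2) →L[ℝ] ℝ).hasFDerivAt.comp x hdiff.hasFDerivAt
    set L : Fin 2 → (EuclideanSpace ℝ (Fin 2) →L[ℝ] ℝ) :=
      fun j => (EuclideanSpace.proj j : EuclideanSpace ℝ (Fin 2) →L[ℝ] ℝ).comp d with hL
    -- gradsq in terms of L
    have hgs : gradsq H x = ∑ i : Fin 2, ∑ j : Fin 2, (L j (EuclideanSpace.single i 1))^2 := by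
      unfold gradsq
      congr 1
      ext i
      congr 1
      ext j
      rw [(hj j).fderiv]
    -- derivatives of the four squared functions
    have h0 : fderiv ℝ (fun y => (H y 0) ^ 2) x = (2 * H x 0) • L 0 := sq_fderiv (hj 0)
    have h1 : fderiv ℝ (fun y => (H y 1) ^ 2) x = (2 * H x 1) • L 1 := sq_fderiv (hj 1)
    have hadd : fderiv ℝ (fun y => (H y 0 + H y 1) ^ 2) x
        = (2 * (H x 0 + H x 1)) • (L 0 + L 1) := sq_fderiv ((hj 0).add (hj 1))
    have hsub : fderiv ℝ (fun y => (H y 0 - H y 1) ^ 2) x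
        = (2 * (H x 0 - H x 1)) • (L 0 - L 1) := sq_fderiv ((hj 0).sub (hj 1))
    have hHnorm : ‖H x‖^2 = (H x 0)^2 + (H x 1)^2 := by
      rw [EuclideanSpace.norm_eq, Real.sq_sqrt (by positivity)]
      simp [Fin.sum_univ_two, sq_abs]
    rw [hgs, h0, h1, hadd, hsub, hHnorm, opnorm_sq, opnorm_sq, opnorm_sq, opnorm_sq]
    simp only [ContinuousLinearMap.smul_apply, ContinuousLinearMap.add_apply,
      ContinuousLinearMap.sub_apply, smul_eq_mul, Fin.sum_univ_two]
    set a := H x 0 with ha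
    set b := H x 1 with hb
    set a0 := L 0 (EuclideanSpace.single 0 1) with ha0
    set a1 := L 0 (EuclideanSpace.single 1 1) with ha1
    set b0 := L 1 (EuclideanSpace.single 0 1) with hb0
    set b1 := L 1 (EuclideanSpace.single 1 1) with hb1
    clear_value a b a0 a1 b0 b1
    clear hgs h0 h1 hadd hsub hHnorm ha hb ha0 ha1 hb0 hb1 hj hL hd hdiff hx hH
    clear L d x H Ω hΩ
    linarith [poly1 a b a0 b0, poly1 a b a1 b1]
  refine ⟨hpt, ?_⟩
  set G1 := fun x => ENNReal.ofReal (‖fderiv ℝ (fun y => (H y 0) ^ 2) x‖ ^ 2) with hG1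
  set G2 := fun x => ENNReal.ofReal (‖fderiv ℝ (fun y => (H y 1) ^ 2) x‖ ^ 2) with hG2
  set G3 := fun x => ENNReal.ofReal (‖fderiv ℝ (fun y => (H y 0 + H y 1) ^ 2) x‖ ^ 2) with hG3
  set G4 := fun x => ENNReal.ofReal (‖fderiv ℝ (fun y => (H y 0 - H y 1) ^ 2) x‖ ^ 2) with hG4
  have meas : ∀ f : EuclideanSpace ℝ (Fin 2) → ℝ,
      Measurable fun x => ENNReal.ofReal (‖fderiv ℝ f x‖ ^ 2) :=
    fun f => (((measurable_fderiv ℝ f).norm).pow_const 2).ennreal_ofReal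
  have step1 : (∫⁻ x in Ω, ENNReal.ofReal (gradsq H x * ‖H x‖ ^ 2))
      ≤ ∫⁻ x in Ω, (G1 x + G2 x + G3 x + G4 x) := by
    apply lintegral_mono_ae
    filter_upwards [ae_restrict_mem hΩ.measurableSet] with x hx
    calc ENNReal.ofReal (gradsq H x * ‖H x‖ ^ 2)
        ≤ ENNReal.ofReal (‖fderiv ℝ (fun y => (H y 0) ^ 2) x‖ ^ 2
          + ‖fderiv ℝ (fun y => (H y 1) ^ 2) x‖ ^ 2
          + ‖fderiv ℝ (fun y => (H y 0 + H y 1) ^ 2) x‖ ^ 2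
          + ‖fderiv ℝ (fun y => (H y 0 - H y 1) ^ 2) x‖ ^ 2) :=
        ENNReal.ofReal_le_ofReal (hpt x hx)
      _ = G1 x + G2 x + G3 x + G4 x := by
        rw [hG1, hG2, hG3, hG4]
        rw [ENNReal.ofReal_add (by positivity) (by positivity),
          ENNReal.ofReal_add (by positivity) (by positivity),
          ENNReal.ofReal_add (by positivity) (by positivity)]
  have m2 : Measurable G2 := hG2 ▸ meas _
  have m3 : Measurable G3 := hG3 ▸ meas _
  have m4 : Measurable G4 := hG4 ▸ meas _
  refine step1.trans_eq ?_
  rw [lintegral_add_right _ m4, lintegral_add_right _ m3, lintegral_add_right _ m2]
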